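/- For the learning rate sequence α_t = (H+1)/(H+t) with H ≥ 1 and weights α_t^i := α_i ∏_{j=i+1}^t (1-α_j), for every t ≥ 1, the maximum over i ∈ {1,…,t} of α_t^i is at most 2H/t. -/

import Mathlib

/-- Learning rate `α_t = (H+1)/(H+t)`. -/
noncomputable def lr (H t : ℕ) : ℝ := (H + 1) / (H + t)

/-- Weight `α_t^i = α_i ∏_{j=i+1}^t (1 - α_j)`. -/
noncomputable def lrW (H t i : ℕ) : ℝ :=
  lr H i * ∏ j ∈ Finset.Icc (i + 1) t, (1 - lr H j)

lemma tele (H i : ℕ) (hH : 1 ≤ H) :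
    ∀ t, i ≤ t →
      ∏ j ∈ Finset.Icc (i + 1) t, (((H : ℝ) + j - 1) / ((H : ℝ) + j))
        = ((H : ℝ) + i) / ((H : ℝ) + t) := by
  intro t ht
  induction t, ht using Nat.le_induction with
  | base =>
    rw [Finset.Icc_eq_empty (by omega), Finset.prod_empty]
    have : (0:ℝ) < (H : ℝ) + i := by positivity
    field_simp
  | succ n hn ih =>
    rw [Finset.prod_Icc_succ_top (by omega), ih]
    have h1 : (0:ℝ) < (H : ℝ) + n := by positivity
    have h2 : (0:ℝ) < (H : ℝ) + (n + 1) := by positivity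
    push_cast
    field_simp
    ring

theorem stmt2 (H : ℕ) (hH : 1 ≤ H) (t : ℕ) (ht : 1 ≤ t) :
    ∀ i ∈ Finset.Icc 1 t, lrW H t i ≤ 2 * (H : ℝ) / t := by
  intro i hi
  rw [Finset.mem_Icc] at hi
  obtain ⟨hi1, hit⟩ := hi
  have hHi : (0:ℝ) < (H : ℝ) + i := by positivity
  have hHt : (0:ℝ) < (H : ℝ) + t := by positivity
  have htp : (0:ℝ) < (t : ℝ) := by exact_mod_cast ht
  have hprod : ∏ j ∈ Finset.Icc (i + 1) t, (1 - lr H j)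
      ≤ ((H : ℝ) + i) / ((H : ℝ) + t) := by
    rw [← tele H i hH t hit]
    apply Finset.prod_le_prod
    · intro j hj
      rw [Finset.mem_Icc] at hj
      have hj1 : 1 ≤ j := by omega
      have hHj : (0:ℝ) < (H : ℝ) + j := by positivity
      unfold lr
      have : ((H : ℝ) + 1) / ((H : ℝ) + j) ≤ 1 := by
        rw [div_le_one hHj]
        have : (1:ℝ) ≤ (j : ℝ) := by exact_mod_cast hj1
        linarith
      linarith
    · intro j hj
      rw [Finset.mem_Icc] at hj
      have hj1 : 1 ≤ j := by omega
      have hHj : (0:ℝ) < (H : ℝ) + j := by positivity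
      have hH1 : (1:ℝ) ≤ (H : ℝ) := by exact_mod_cast hH
      unfold lr
      rw [sub_le_iff_le_add, ← add_div, le_div_iff₀ hHj]
      linarith
  have hlr : lr H i ≤ ((H : ℝ) + 1) / ((H : ℝ) + i) := le_of_eq rfl
  have hlrpos : 0 ≤ lr H i := by
    unfold lr; positivity
  have hprodnn : 0 ≤ ∏ j ∈ Finset.Icc (i + 1) t, (1 - lr H j) := by
    apply Finset.prod_nonneg
    intro j hj
    rw [Finset.mem_Icc] at hj
    have hj1 : 1 ≤ j := by omega
    have hHj : (0:ℝ) < (H : ℝ) + j := by positivity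
    unfold lr
    have : ((H : ℝ) + 1) / ((H : ℝ) + j) ≤ 1 := by
      rw [div_le_one hHj]
      have : (1:ℝ) ≤ (j : ℝ) := by exact_mod_cast hj1
      linarith
    linarith
  have key : lrW H t i ≤ ((H : ℝ) + 1) / ((H : ℝ) + t) := by
    unfold lrW
    calc lr H i * ∏ j ∈ Finset.Icc (i + 1) t, (1 - lr H j)
        ≤ (((H : ℝ) + 1) / ((H : ℝ) + i)) * (((H : ℝ) + i) / ((H : ℝ) + t)) := by
          apply mul_le_mul hlr hprod hprodnn (by positivity)
      _ = ((H : ℝ) + 1) / ((H : ℝ) + t) := by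
          field_simp
  refine key.trans ?_
  rw [div_le_div_iff₀ hHt htp]
  have hH1 : (1:ℝ) ≤ (H : ℝ) := by exact_mod_cast hH
  have ht1 : (1:ℝ) ≤ (t : ℝ) := by exact_mod_cast ht
  nlinarith
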